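/- The weak-star closure of the set D = { Σ_{i=1}^n λ_i s_i* : s_i ∈ S pairwise disjoint, Σ λ_i² ≤ 1 } contains all extreme points of the unit ball of JS*. -/

import Mathlib

open Set Filter Topology
open scoped Classical

variable {Γ : Type*}

/-- Sum of a finitely supported function `φ` over a set `s` (i.e. `s*(φ) = Σ_{a∈s} φ(a)`). -/
noncomputable def segSum (s : Set Γ) (φ : Γ →₀ ℝ) : ℝ :=
  ∑ a ∈ φ.support, if a ∈ s then φ a else 0

/-- The candidate values `(Σ_i (Σ_{a∈s_i} φ(a))²)^{1/2}` over finite pairwise disjoint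
families `{s_1,…,s_n} ⊆ S`. -/
noncomputable def jamesSet (S : Set (Set Γ)) (φ : Γ →₀ ℝ) : Set ℝ :=
  { r | ∃ F : Finset (Set Γ), ↑F ⊆ S ∧ (F : Set (Set Γ)).Pairwise Disjoint ∧
      r = Real.sqrt (∑ s ∈ F, (segSum s φ) ^ 2) }

/-- The James-`S` norm on finitely supported functions. -/
noncomputable def jamesNorm (S : Set (Set Γ)) (φ : Γ →₀ ℝ) : ℝ :=
  sSup (jamesSet S φ)

/-- The characteristic function of a set, viewed in `Γ → ℝ`. -/
noncomputable def indicatorFun (s : Set Γ) : Γ → ℝ := s.indicator fun _ => 1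

/-- A family of subsets of `Γ` is countably intersected (Definition 1.1). -/
structure IsCI (S : Set (Set Γ)) : Prop where
  /-- (a) pointwise closed -/
  closed : IsClosed (indicatorFun '' S)
  /-- (a) members countable -/
  countable : ∀ s ∈ S, s.Countable
  /-- (a) contains singletons -/
  singletons : ∀ γ : Γ, {γ} ∈ S
  /-- (b) differences are finite disjoint unions of members -/
  diff : ∀ s ∈ S, ∀ t ∈ S, ∃ F : Finset (Set Γ), ↑F ⊆ S ∧
    (F : Set (Set Γ)).Pairwise Disjoint ∧ s \ t = ⋃₀ ↑F
  /-- (c) the enveloping condition -/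
  env : ∃ st : Set Γ → Set Γ, (∀ t ∈ S, st t ∈ S ∧ t ⊆ st t) ∧
    ∀ s ∈ S, ∀ n : ℕ, ∀ ts : Fin n → Set Γ, (∀ i, ts i ∈ S) →
      ∃ t ∈ S, t ⊆ s \ (⋃ i, st (ts i)) ∧ (s \ ((⋃ i, st (ts i)) ∪ t)).Finite
  /-- (d) each `L_s = {s ∩ t : t ∈ S}` is countable -/
  inter_countable : ∀ s ∈ S, { u : Set Γ | ∃ t ∈ S, u = s ∩ t }.Countable

/-- Pairing of a "dual vector" `g : Γ → ℝ` with a finitely supported function. -/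
noncomputable def dPair (g : Γ → ℝ) (φ : Γ →₀ ℝ) : ℝ := ∑ a ∈ φ.support, φ a * g a

/-- The unit ball of the dual of `JS`, modelled as those `g : Γ → ℝ` whose pairing with every
finitely supported function is dominated by the James-`S` norm; the product topology on
`Γ → ℝ` is the weak-star topology on this ball. -/
def dualBall (S : Set (Set Γ)) : Set (Γ → ℝ) :=
  { g | ∀ φ : Γ →₀ ℝ, |dPair g φ| ≤ jamesNorm S φ }

/-- The dual norm of `g` as a functional on `(Φ, ‖·‖_{J-S})`. -/
noncomputable def dualNorm (S : Set (Set Γ)) (g : Γ → ℝ) : ℝ :=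
  sSup { r | ∃ φ : Γ →₀ ℝ, jamesNorm S φ ≤ 1 ∧ r = |dPair g φ| }

/-- The set `D = {Σ_{i=1}^n λ_i s_i* : s_i ∈ S pairwise disjoint, Σ λ_i² ≤ 1}`. -/
def Dset (S : Set (Set Γ)) : Set (Γ → ℝ) :=
  { g | ∃ (n : ℕ) (l : Fin n → ℝ) (s : Fin n → Set Γ), (∀ i, s i ∈ S) ∧
      Pairwise (Function.onFun Disjoint s) ∧ (∑ i, l i ^ 2) ≤ 1 ∧
      g = fun γ => ∑ i, if γ ∈ s i then l i else 0 }


section Aux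

variable {Γ : Type*}

/-- The box `[-1,1]^Γ`. -/
def unitBox (Γ : Type*) : Set (Γ → ℝ) := Set.pi Set.univ fun _ : Γ => Set.Icc (-1 : ℝ) 1

lemma isCompact_unitBox : IsCompact (unitBox Γ) :=
  isCompact_univ_pi fun _ => isCompact_Icc

lemma isClosed_unitBox : IsClosed (unitBox Γ) :=
  isClosed_set_pi fun _ _ => isClosed_Icc

lemma convex_unitBox : Convex ℝ (unitBox Γ) :=
  convex_pi fun _ _ => convex_Icc _ _

lemma zero_mem_Dset (S : Set (Set Γ)) : (0 : Γ → ℝ) ∈ Dset S := by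
  refine ⟨0, ![], ![], by simp, ?_, by simp, ?_⟩
  · intro i; exact i.elim0
  · funext γ; simp

lemma Dset_subset_unitBox (S : Set (Set Γ)) : Dset S ⊆ unitBox Γ := by
  rintro g ⟨n, l, s, hs, hdisj, hl, rfl⟩ γ _
  simp only [Set.mem_Icc, ← abs_le]
  have hcard : (Finset.univ.filter fun i => γ ∈ s i).card ≤ 1 := by
    rw [Finset.card_le_one]
    intro i hi j hj
    by_contra hij
    simp only [Finset.mem_filter] at hi hj
    exact Set.disjoint_left.1 (hdisj hij) hi.2 hj.2
  rw [show (∑ i, if γ ∈ s i then l i else 0)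
      = ∑ i ∈ Finset.univ.filter fun i => γ ∈ s i, l i from (Finset.sum_filter _ _).symm]
  rcases Finset.eq_empty_or_nonempty (Finset.univ.filter fun i => γ ∈ s i) with he | hne
  · simp [he]
  · obtain ⟨i, heq⟩ := Finset.card_eq_one.1 (le_antisymm hcard (Finset.card_pos.2 hne))
    rw [heq]
    rw [Finset.sum_singleton, ← sq_le_one_iff_abs_le_one]
    exact (Finset.single_le_sum (f := fun j => l j ^ 2)
      (fun j _ => sq_nonneg _) (Finset.mem_univ i)).trans hl

end Aux
section Aux2

variable {Γ : Type*} {S : Set (Set Γ)} {φ : Γ →₀ ℝ}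

lemma dPair_sum_repr (n : ℕ) (l : Fin n → ℝ) (s : Fin n → Set Γ) (φ : Γ →₀ ℝ) :
    dPair (fun γ => ∑ i, if γ ∈ s i then l i else 0) φ = ∑ i, l i * segSum (s i) φ := by
  unfold dPair segSum
  simp_rw [Finset.mul_sum]
  rw [Finset.sum_comm]
  refine Finset.sum_congr rfl fun i _ => Finset.sum_congr rfl fun a _ => ?_
  split_ifs <;> ring

lemma sum_segSum_abs_le (F : Finset (Set Γ)) (hdisj : (F : Set (Set Γ)).Pairwise Disjoint)
    (φ : Γ →₀ ℝ) : ∑ s ∈ F, |segSum s φ| ≤ ∑ a ∈ φ.support, |φ a| := by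
  calc ∑ s ∈ F, |segSum s φ|
      ≤ ∑ s ∈ F, ∑ a ∈ φ.support, (if a ∈ s then |φ a| else 0) := by
        refine Finset.sum_le_sum fun s _ => (Finset.abs_sum_le_sum_abs _ _).trans
          (Finset.sum_le_sum fun a _ => ?_)
        split_ifs <;> simp
    _ = ∑ a ∈ φ.support, ∑ s ∈ F, (if a ∈ s then |φ a| else 0) := Finset.sum_comm
    _ ≤ ∑ a ∈ φ.support, |φ a| := by
        refine Finset.sum_le_sum fun a _ => ?_
        rw [← Finset.sum_filter, Finset.sum_const]
        have hc : (F.filter fun s => a ∈ s).card ≤ 1 := by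
          rw [Finset.card_le_one]
          intro s hs t ht
          simp only [Finset.mem_filter] at hs ht
          by_contra hst
          exact Set.disjoint_left.1 (hdisj (Finset.mem_coe.2 hs.1) (Finset.mem_coe.2 ht.1) hst)
            hs.2 ht.2
        calc (F.filter fun s => a ∈ s).card • |φ a| ≤ 1 * |φ a| := by
              rw [nsmul_eq_mul]
              exact mul_le_mul_of_nonneg_right (by exact_mod_cast hc) (abs_nonneg _)
          _ = |φ a| := one_mul _

lemma jamesSet_le {r : ℝ} (hr : r ∈ jamesSet S φ) : r ≤ ∑ a ∈ φ.support, |φ a| := by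
  obtain ⟨F, hFS, hdisj, rfl⟩ := hr
  have h1 : ∑ s ∈ F, segSum s φ ^ 2 ≤ (∑ a ∈ φ.support, |φ a|) ^ 2 :=
    calc ∑ s ∈ F, segSum s φ ^ 2 = ∑ s ∈ F, |segSum s φ| ^ 2 := by simp [sq_abs]
      _ ≤ (∑ s ∈ F, |segSum s φ|) ^ 2 :=
          Finset.sum_sq_le_sq_sum_of_nonneg fun _ _ => abs_nonneg _
      _ ≤ _ := pow_le_pow_left₀ (Finset.sum_nonneg fun _ _ => abs_nonneg _)
          (sum_segSum_abs_le F hdisj φ) 2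
  calc Real.sqrt (∑ s ∈ F, segSum s φ ^ 2)
      ≤ Real.sqrt ((∑ a ∈ φ.support, |φ a|) ^ 2) := Real.sqrt_le_sqrt h1
    _ = _ := Real.sqrt_sq (by positivity)

lemma zero_mem_jamesSet : (0 : ℝ) ∈ jamesSet S φ :=
  ⟨∅, by simp, by simp, by simp⟩

lemma bddAbove_jamesSet : BddAbove (jamesSet S φ) :=
  ⟨_, fun _ hr => jamesSet_le hr⟩

lemma le_jamesNorm {r : ℝ} (hr : r ∈ jamesSet S φ) : r ≤ jamesNorm S φ :=
  le_csSup bddAbove_jamesSet hr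

lemma jamesNorm_nonneg : 0 ≤ jamesNorm S φ := le_jamesNorm zero_mem_jamesSet

lemma jamesNorm_le {c : ℝ} (hc : 0 ≤ c) (h : ∀ r ∈ jamesSet S φ, r ≤ c) :
    jamesNorm S φ ≤ c := Real.sSup_le h hc

lemma sum_sq_eq_image (n : ℕ) (s : Fin n → Set Γ) (hdisj : Pairwise (Function.onFun Disjoint s))
    (φ : Γ →₀ ℝ) :
    ∃ F : Finset (Set Γ), (∀ t ∈ F, ∃ i, t = s i) ∧ (F : Set (Set Γ)).Pairwise Disjoint ∧
      ∑ i, segSum (s i) φ ^ 2 = ∑ t ∈ F, segSum t φ ^ 2 := by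
  set T := Finset.univ.filter fun i => s i ≠ ∅ with hT
  have hinj : ∀ x ∈ T, ∀ y ∈ T, s x = s y → x = y := by
    intro i hi j hj hij
    by_contra hne
    have hd := hdisj hne
    rw [Function.onFun, hij, disjoint_self] at hd
    simp only [hT, Finset.mem_filter] at hj
    exact hj.2 hd
  refine ⟨T.image s, ?_, ?_, ?_⟩
  · intro t ht
    obtain ⟨i, _, rfl⟩ := Finset.mem_image.1 ht
    exact ⟨i, rfl⟩
  · intro t₁ h₁ t₂ h₂ hne
    obtain ⟨i, _, rfl⟩ := Finset.mem_image.1 (Finset.mem_coe.1 h₁)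
    obtain ⟨j, _, rfl⟩ := Finset.mem_image.1 (Finset.mem_coe.1 h₂)
    exact hdisj fun hij => hne (by rw [hij])
  · rw [Finset.sum_image hinj]
    refine (Finset.sum_subset (Finset.subset_univ T) fun i _ hi => ?_).symm
    simp only [hT, Finset.mem_filter, Finset.mem_univ, true_and, not_not] at hi
    simp [segSum, hi]

lemma Dset_subset_dualBall : Dset S ⊆ dualBall S := by
  rintro g ⟨n, l, s, hsS, hdisj, hl, rfl⟩ φ
  rw [dPair_sum_repr]
  obtain ⟨F, hF, hFdisj, hsum⟩ := sum_sq_eq_image n s hdisj φ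
  have hFS : ↑F ⊆ S := fun t ht => by
    obtain ⟨i, rfl⟩ := hF t ht; exact hsS i
  refine le_trans ?_ (le_jamesNorm ⟨F, hFS, hFdisj, rfl⟩)
  rw [← hsum]
  have h2 : (∑ i, l i * segSum (s i) φ) ^ 2 ≤ ∑ i, segSum (s i) φ ^ 2 :=
    (Finset.sum_mul_sq_le_sq_mul_sq Finset.univ l fun i => segSum (s i) φ).trans
      (mul_le_of_le_one_left (Finset.sum_nonneg fun _ _ => sq_nonneg _) hl)
  calc |∑ i, l i * segSum (s i) φ|
      = Real.sqrt ((∑ i, l i * segSum (s i) φ) ^ 2) := (Real.sqrt_sq_eq_abs _).symm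
    _ ≤ _ := Real.sqrt_le_sqrt h2

end Aux2
section Aux3

variable {Γ : Type*} {S : Set (Set Γ)}

/-- The pairing with `φ` as a continuous linear map on `Γ → ℝ`. -/
noncomputable def pairCLM (φ : Γ →₀ ℝ) : (Γ → ℝ) →L[ℝ] ℝ :=
  ∑ a ∈ φ.support, φ a • ContinuousLinearMap.proj a

lemma pairCLM_apply (φ : Γ →₀ ℝ) (g : Γ → ℝ) : pairCLM φ g = dPair g φ := by
  simp [pairCLM, dPair, ContinuousLinearMap.sum_apply, mul_comm]

lemma isClosed_dualBall : IsClosed (dualBall S) := by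
  have h : dualBall S = ⋂ φ : Γ →₀ ℝ, {g | |pairCLM φ g| ≤ jamesNorm S φ} := by
    ext g; simp [dualBall, pairCLM_apply]
  rw [h]
  exact isClosed_iInter fun φ =>
    isClosed_le ((pairCLM φ).continuous.abs) continuous_const

lemma convex_dualBall : Convex ℝ (dualBall S) := by
  intro x hx y hy a b ha hb hab
  intro φ
  have hrepr : dPair (a • x + b • y) φ = a * dPair x φ + b * dPair y φ := by
    rw [← pairCLM_apply, ← pairCLM_apply, ← pairCLM_apply, map_add, map_smul, map_smul]
    simp
  rw [hrepr]
  calc |a * dPair x φ + b * dPair y φ| ≤ a * |dPair x φ| + b * |dPair y φ| := by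
        refine (abs_add_le _ _).trans ?_
        rw [abs_mul, abs_mul, abs_of_nonneg ha, abs_of_nonneg hb]
    _ ≤ a * jamesNorm S φ + b * jamesNorm S φ := by
        gcongr
        · exact hx φ
        · exact hy φ
    _ = jamesNorm S φ := by rw [← add_mul, hab, one_mul]

lemma exists_finsupp_of_clm (f : (Γ → ℝ) →L[ℝ] ℝ) :
    ∃ φ : Γ →₀ ℝ, ∀ g, f g = dPair g φ := by
  have h0 : Metric.ball (0 : ℝ) 1 ∈ 𝓝 (f 0) := by
    rw [map_zero]; exact Metric.ball_mem_nhds _ one_pos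
  have h1 : f ⁻¹' Metric.ball 0 1 ∈ 𝓝 (0 : Γ → ℝ) := f.continuous.continuousAt h0
  rw [nhds_pi, Filter.mem_pi'] at h1
  obtain ⟨I, t, ht, hsub⟩ := h1
  have hvanish : ∀ g : Γ → ℝ, (∀ a ∈ I, g a = 0) → f g = 0 := by
    intro g hg
    by_contra hfg
    have hc : ∀ c : ℝ, c • g ∈ (I : Set Γ).pi t := by
      intro c a ha
      have h2 : (c • g) a = 0 := by simp [hg a ha]
      rw [h2]; exact mem_of_mem_nhds (ht a)
    have h3 := hsub (hc (2 / |f g|))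
    have habs : |f ((2 / |f g|) • g)| = 2 := by
      rw [map_smul, smul_eq_mul, abs_mul, abs_div, abs_two, abs_abs,
        div_mul_cancel₀ _ (abs_ne_zero.2 hfg)]
    rw [Set.mem_preimage, Metric.mem_ball, dist_zero_right, Real.norm_eq_abs, habs] at h3
    linarith
  refine ⟨Finsupp.onFinset I (fun a => if a ∈ I then f (Pi.single a 1) else 0)
    (fun a ha => by by_contra h; simp [h] at ha), fun g => ?_⟩
  set ψ : Γ →₀ ℝ := Finsupp.onFinset I (fun a => if a ∈ I then f (Pi.single a 1) else 0)
    (fun a ha => by by_contra h; simp [h] at ha) with hψ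
  have hres : (fun x => if x ∈ I then g x else 0) = ∑ a ∈ I, g a • (Pi.single a 1 : Γ → ℝ) := by
    funext x
    rw [Finset.sum_apply]
    simp only [Pi.smul_apply, Pi.single_apply, smul_eq_mul, mul_ite, mul_one, mul_zero]
    rw [Finset.sum_ite_eq I x g]
  have hsplit : f g = f (fun x => if x ∈ I then g x else 0) := by
    have : g = (fun x => if x ∈ I then g x else 0) + fun x => if x ∈ I then 0 else g x := by
      funext x; by_cases hx : x ∈ I <;> simp [hx]
    rw [show f g = f ((fun x => if x ∈ I then g x else 0) + fun x => if x ∈ I then 0 else g x)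
        from by rw [← this], map_add, hvanish (fun x => if x ∈ I then 0 else g x)
        (fun a ha => by simp [ha]), add_zero]
  rw [hsplit, hres, map_sum]
  have hdp : dPair g ψ = ∑ a ∈ I, ψ a * g a := by
    refine Finset.sum_subset Finsupp.support_onFinset_subset fun a _ ha => ?_
    rw [Finsupp.notMem_support_iff.1 ha, zero_mul]
  rw [hdp]
  refine Finset.sum_congr rfl fun a ha => ?_
  rw [map_smul, smul_eq_mul]
  have : ψ a = f (Pi.single a 1) := by simp [hψ, Finsupp.onFinset_apply, ha]
  rw [this, mul_comm]

lemma dualBall_subset_closure_convexHull :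
    dualBall S ⊆ closure (convexHull ℝ (Dset S)) := by
  intro e he
  by_contra hne
  obtain ⟨f, u, hfu, hue⟩ := geometric_hahn_banach_closed_point
    ((convex_convexHull ℝ _).closure) isClosed_closure hne
  obtain ⟨φ, hφ⟩ := exists_finsupp_of_clm f
  have hmemB : ∀ d ∈ Dset S, f d < u := fun d hd =>
    hfu d (subset_closure (subset_convexHull ℝ _ hd))
  have h0 : (0 : ℝ) < u := by
    have := hmemB 0 (zero_mem_Dset S)
    rwa [map_zero] at this
  have hnorm : jamesNorm S φ ≤ u := by
    refine jamesNorm_le h0.le fun r hr => ?_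
    obtain ⟨F, hFS, hdisj, rfl⟩ := hr
    set q : ℝ := ∑ s ∈ F, segSum s φ ^ 2 with hq
    have hq0 : 0 ≤ q := Finset.sum_nonneg fun _ _ => sq_nonneg _
    rcases eq_or_lt_of_le (Real.sqrt_nonneg q) with h | h
    · rw [← h]; exact h0.le
    · have hqpos : 0 < q := Real.sqrt_pos.1 h
      -- construct the element of `Dset` attaining the value `√q`
      set r : ℝ := Real.sqrt q with hr
      have hr2 : r ^ 2 = q := Real.sq_sqrt hq0
      set n : ℕ := F.card with hn
      set eqv : {x // x ∈ F} ≃ Fin n := F.equivFin with heqv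
      set s : Fin n → Set Γ := fun i => (eqv.symm i : Set Γ) with hs
      have hsum : ∀ f' : Set Γ → ℝ, ∑ i, f' (s i) = ∑ x ∈ F, f' x := by
        intro f'
        rw [← Finset.sum_coe_sort F f']
        exact Equiv.sum_comp eqv.symm fun x => f' ↑x
      set l : Fin n → ℝ := fun i => segSum (s i) φ / r with hl
      have hsS' : ∀ i, s i ∈ S := fun i => hFS (eqv.symm i).2
      have hdisj' : Pairwise (Function.onFun Disjoint s) := by
        intro i j hij
        have hne' : s i ≠ s j := by
          intro hss
          exact hij (by simpa using congrArg eqv (Subtype.coe_injective hss))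
        exact hdisj (Finset.mem_coe.2 (eqv.symm i).2) (Finset.mem_coe.2 (eqv.symm j).2) hne'
      have hl2 : (∑ i, l i ^ 2) ≤ 1 := by
        have : ∑ i, l i ^ 2 = q / r ^ 2 := by
          simp only [hl, div_pow, ← Finset.sum_div]
          rw [hsum fun x => segSum x φ ^ 2]
        rw [this, hr2, div_self hqpos.ne']
      have hd : (fun γ => ∑ i, if γ ∈ s i then l i else 0) ∈ Dset S :=
        ⟨n, l, s, hsS', hdisj', hl2, rfl⟩
      have hfd : f (fun γ => ∑ i, if γ ∈ s i then l i else 0) = r := by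
        rw [hφ, dPair_sum_repr]
        have : ∀ i, l i * segSum (s i) φ = segSum (s i) φ ^ 2 / r := fun i => by
          rw [hl]; ring
        rw [Finset.sum_congr rfl fun i _ => this i, ← Finset.sum_div,
          hsum fun x => segSum x φ ^ 2, ← hq, ← hr2, sq, mul_div_assoc,
          div_self h.ne', mul_one]
      have := hmemB _ hd
      rw [hfd] at this
      exact this.le
  have hfe : f e ≤ jamesNorm S φ := by
    rw [hφ]; exact (le_abs_self _).trans (he φ)
  linarith [hfe.trans hnorm]

end Aux3
section Aux4

variable {Γ : Type*} {S : Set (Set Γ)}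

lemma isCompact_convexJoin {s t : Set (Γ → ℝ)} (hs : IsCompact s) (ht : IsCompact t) :
    IsCompact (convexJoin ℝ s t) := by
  have himg : convexJoin ℝ s t =
      (fun p : ℝ × (Γ → ℝ) × (Γ → ℝ) => (1 - p.1) • p.2.1 + p.1 • p.2.2) ''
        (Set.Icc (0 : ℝ) 1 ×ˢ s ×ˢ t) := by
    ext x
    constructor
    · intro hx
      obtain ⟨a, ha, b, hb, hseg⟩ := mem_convexJoin.1 hx
      rw [segment_eq_image] at hseg
      obtain ⟨θ, hθ, rfl⟩ := hseg
      exact ⟨(θ, a, b), ⟨hθ, ha, hb⟩, rfl⟩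
    · rintro ⟨⟨θ, a, b⟩, ⟨hθ, ha, hb⟩, rfl⟩
      refine mem_convexJoin.2 ⟨a, ha, b, hb, ?_⟩
      rw [segment_eq_image]
      exact ⟨θ, hθ, rfl⟩
  rw [himg]
  refine (isCompact_Icc.prod (hs.prod ht)).image ?_
  fun_prop

lemma isCompact_convexHull_biUnion {ι : Type*} (T : Finset ι) {C : ι → Set (Γ → ℝ)}
    (hcomp : ∀ i ∈ T, IsCompact (C i)) (hconv : ∀ i ∈ T, Convex ℝ (C i))
    (hne : ∀ i ∈ T, (C i).Nonempty) :
    IsCompact (convexHull ℝ (⋃ i ∈ T, C i)) := by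
  induction T using Finset.induction_on with
  | empty => simp
  | @insert i T hiT ih =>
    simp only [Finset.set_biUnion_insert]
    rcases T.eq_empty_or_nonempty with rfl | hTne
    · simp only [Finset.notMem_empty, Set.iUnion_of_empty, Set.iUnion_empty, Set.union_empty]
      rw [(hconv i (Finset.mem_insert_self i _)).convexHull_eq]
      exact hcomp i (Finset.mem_insert_self i _)
    · have h1 : (C i).Nonempty := hne i (Finset.mem_insert_self i T)
      obtain ⟨j, hj⟩ := hTne
      have h2 : (⋃ x ∈ T, C x).Nonempty := by
        obtain ⟨y, hy⟩ := hne j (Finset.mem_insert_of_mem hj)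
        exact ⟨y, Set.mem_biUnion hj hy⟩
      rw [convexHull_union h1 h2, (hconv i (Finset.mem_insert_self i T)).convexHull_eq]
      exact isCompact_convexJoin (hcomp i (Finset.mem_insert_self i T))
        (ih (fun x hx => hcomp x (Finset.mem_insert_of_mem hx))
          (fun x hx => hconv x (Finset.mem_insert_of_mem hx))
          (fun x hx => hne x (Finset.mem_insert_of_mem hx)))

lemma isOpen_approxSet (A : Finset Γ) (k : Γ → ℝ) (ε : ℝ) :
    IsOpen {x : Γ → ℝ | ∀ a ∈ A, |x a - k a| < ε} := by
  have h : {x : Γ → ℝ | ∀ a ∈ A, |x a - k a| < ε} =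
      ⋂ a ∈ A, (fun x : Γ → ℝ => x a) ⁻¹' Metric.ball (k a) ε := by
    ext x; simp [Real.dist_eq]
  rw [h]
  exact isOpen_biInter_finset fun a _ => Metric.isOpen_ball.preimage (continuous_apply a)

lemma isClosed_approxSetCl (A : Finset Γ) (k : Γ → ℝ) (ε : ℝ) :
    IsClosed {x : Γ → ℝ | ∀ a ∈ A, |x a - k a| ≤ ε} := by
  have h : {x : Γ → ℝ | ∀ a ∈ A, |x a - k a| ≤ ε} =
      ⋂ a ∈ A, (fun x : Γ → ℝ => x a) ⁻¹' Metric.closedBall (k a) ε := by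
    ext x; simp [Real.dist_eq]
  rw [h]
  exact isClosed_biInter fun a _ => Metric.isClosed_closedBall.preimage (continuous_apply a)

lemma convex_approxSetCl (A : Finset Γ) (k : Γ → ℝ) (ε : ℝ) :
    Convex ℝ {x : Γ → ℝ | ∀ a ∈ A, |x a - k a| ≤ ε} := by
  intro x hx y hy a b ha hb hab
  intro γ hγ
  have h1 : (a • x + b • y) γ - k γ = a * (x γ - k γ) + b * (y γ - k γ) := by
    have : (a • x + b • y) γ = a * x γ + b * y γ := by simp
    rw [this]
    have hk : k γ = a * k γ + b * k γ := by rw [← add_mul, hab, one_mul]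
    nth_rewrite 1 [hk]
    ring
  rw [h1]
  calc |a * (x γ - k γ) + b * (y γ - k γ)|
      ≤ a * |x γ - k γ| + b * |y γ - k γ| := by
        refine (abs_add_le _ _).trans ?_
        rw [abs_mul, abs_mul, abs_of_nonneg ha, abs_of_nonneg hb]
    _ ≤ a * ε + b * ε := by gcongr; exacts [hx γ hγ, hy γ hγ]
    _ = ε := by rw [← add_mul, hab, one_mul]

lemma extreme_approx {e : Γ → ℝ} (he : e ∈ Set.extremePoints ℝ (dualBall S))
    (A : Finset Γ) {ε : ℝ} (hε : 0 < ε) :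
    ∃ k ∈ closure (Dset S), ∀ a ∈ A, |e a - k a| ≤ ε := by
  set K := closure (Dset S) with hK
  set B := closure (convexHull ℝ (Dset S)) with hB
  have hKbox : K ⊆ unitBox Γ := closure_minimal (Dset_subset_unitBox S) isClosed_unitBox
  have hKcomp : IsCompact K :=
    isCompact_unitBox.of_isClosed_subset isClosed_closure hKbox
  have hBconv : Convex ℝ B := (convex_convexHull ℝ _).closure
  have hBbox : B ⊆ unitBox Γ :=
    closure_minimal (convexHull_min (Dset_subset_unitBox S) convex_unitBox) isClosed_unitBox
  have hKB : K ⊆ B := closure_mono (subset_convexHull ℝ _)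
  have hBall : dualBall S = B :=
    le_antisymm dualBall_subset_closure_convexHull
      (closure_minimal (convexHull_min Dset_subset_dualBall convex_dualBall) isClosed_dualBall)
  rw [hBall] at he
  -- cover K by finitely many ε-neighborhoods
  have hcover : K ⊆ ⋃ k ∈ K, {x : Γ → ℝ | ∀ a ∈ A, |x a - k a| < ε} := by
    intro k hk
    exact Set.mem_biUnion hk fun a _ => by simpa using hε
  obtain ⟨b', hb'K, hb'fin, hb'cov⟩ := hKcomp.elim_finite_subcover_image
    (fun k _ => isOpen_approxSet A k ε) hcover
  set T := hb'fin.toFinset with hT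
  have hTK : ∀ k ∈ T, k ∈ K := fun k hk => hb'K (hb'fin.mem_toFinset.1 hk)
  -- the compact convex pieces
  set C : (Γ → ℝ) → Set (Γ → ℝ) :=
    fun k => closure (convexHull ℝ (K ∩ {x | ∀ a ∈ A, |x a - k a| ≤ ε})) with hC
  have hCW : ∀ k, C k ⊆ {x | ∀ a ∈ A, |x a - k a| ≤ ε} := fun k =>
    closure_minimal (convexHull_min Set.inter_subset_right (convex_approxSetCl A k ε))
      (isClosed_approxSetCl A k ε)
  have hCB : ∀ k, C k ⊆ B := fun k =>
    closure_minimal (convexHull_min (Set.inter_subset_left.trans hKB) hBconv) isClosed_closure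
  have hCcomp : ∀ k, IsCompact (C k) := fun k =>
    isCompact_unitBox.of_isClosed_subset isClosed_closure ((hCB k).trans hBbox)
  have hCconv : ∀ k, Convex ℝ (C k) := fun k => (convex_convexHull ℝ _).closure
  have hCne : ∀ k ∈ T, (C k).Nonempty := fun k hk =>
    ⟨k, subset_closure (subset_convexHull ℝ _ ⟨hTK k hk, fun a _ => by simpa using hε.le⟩)⟩
  -- the convex hull of the union of the pieces is all of B
  have hJcomp : IsCompact (convexHull ℝ (⋃ k ∈ T, C k)) :=
    isCompact_convexHull_biUnion T (fun k _ => hCcomp k) (fun k _ => hCconv k) hCne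
  have hBeq : B = convexHull ℝ (⋃ k ∈ T, C k) := by
    refine le_antisymm ?_ (convexHull_min (Set.iUnion₂_subset fun k _ => hCB k) hBconv)
    refine closure_minimal (convexHull_min ?_ (convex_convexHull ℝ _)) hJcomp.isClosed
    intro d hd
    have hdK : d ∈ K := subset_closure hd
    obtain ⟨k, hk, hdk⟩ := Set.mem_iUnion₂.1 (hb'cov hdK)
    refine subset_convexHull ℝ _ (Set.mem_biUnion (hb'fin.mem_toFinset.2 hk) ?_)
    exact subset_closure (subset_convexHull ℝ _ ⟨hdK, fun a ha => (hdk a ha).le⟩)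
  rw [hBeq] at he
  obtain ⟨k, hkT, hek⟩ := Set.mem_iUnion₂.1 (extremePoints_convexHull_subset he)
  exact ⟨k, hTK k hkT, fun a ha => hCW k hek a ha⟩

end Aux4
/-- The weak-star closure of `D = {Σ λ_i s_i* : s_i ∈ S pairwise disjoint, Σ λ_i² ≤ 1}`
contains all extreme points of the unit ball of `JS*`.  (The dual ball is modelled inside
`Γ → ℝ`, whose product topology is the weak-star topology on bounded sets.) -/
theorem stmt6 {Γ : Type*} (S : Set (Set Γ)) :
    Set.extremePoints ℝ (dualBall S) ⊆ closure (Dset S) := by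
  intro e he
  rw [mem_closure_iff]
  intro O hO hOe
  obtain ⟨I, u, hu, hIO⟩ := isOpen_pi_iff.1 hO e hOe
  rcases I.eq_empty_or_nonempty with rfl | hI
  · exact ⟨0, hIO (by simp), zero_mem_Dset S⟩
  · choose! δ hδpos hδ using
      fun a (ha : a ∈ I) => Metric.isOpen_iff.1 (hu a ha).1 (e a) (hu a ha).2
    set ε := I.inf' hI δ with hεdef
    have hε : 0 < ε := (Finset.lt_inf'_iff hI).2 fun a ha => hδpos a ha
    obtain ⟨k, hkK, hk⟩ := extreme_approx he I (by positivity : (0:ℝ) < ε / 4)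
    obtain ⟨d, hdV, hdD⟩ :=
      mem_closure_iff.1 hkK {x : Γ → ℝ | ∀ a ∈ I, |x a - k a| < ε / 4}
        (isOpen_approxSet I k (ε / 4)) (fun a _ => by simpa using (by positivity : (0:ℝ) < ε/4))
    refine ⟨d, hIO fun a ha => ?_, hdD⟩
    apply hδ a ha
    rw [Metric.mem_ball, Real.dist_eq]
    calc |d a - e a| ≤ |d a - k a| + |k a - e a| := abs_sub_le _ _ _
      _ < ε / 4 + ε / 4 := by
          refine add_lt_add_of_lt_of_le (hdV a ha) ?_
          rw [abs_sub_comm]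
          exact hk a ha
      _ < ε := by linarith
      _ ≤ δ a := Finset.inf'_le _ ha
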